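/- arXiv:1702.07109 — 2 statements merged into one kernel-verified Lean document; each statement's English description precedes it below -/
import Mathlib

section
/- With E_max/E_min = 4 and m(θ) = −1/log₂(cos θ), the inequality 16^{1/(m(θ)+3)} − 1 > tan² θ holds for θ = 37° (expressed in radians, θ = 37π/180), i.e., the illumination constraint does not bind at θ ≤ 37°. -/
open Real

set_option maxHeartbeats 1000000 in
/-- With `E_max/E_min = 4` and Lambertian index `m(θ) = −1/log₂(cos θ)`, the
inequality `16^{1/(m(θ)+3)} − 1 > tan² θ` holds at `θ = 37π/180`. -/
theorem illumination_inactive_at_37deg :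
    Real.tan (37 * π / 180) ^ 2 <
      (16 : ℝ) ^ (1 / (-1 / Real.logb 2 (Real.cos (37 * π / 180)) + 3)) - 1 := by
  have hpi1 : 3.141592 < π := Real.pi_gt_d6
  have hpi2 : π < 3.141593 := Real.pi_lt_d6
  set a : ℝ := 37 * π / 180 with ha
  have ha0 : 0 < a := by rw [ha]; positivity
  have ha1 : a < π / 2 := by rw [ha]; nlinarith
  have hc0 : 0 < Real.cos a := Real.cos_pos_of_mem_Ioo ⟨by linarith, ha1⟩
  -- half-angle bound on cos a
  have ht0 : 0 < a / 2 := by linarith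
  have ht1 : a / 2 ≤ 0.322886 := by rw [ha]; nlinarith
  have hsb := Real.sin_bound (x := a / 2) (by rw [abs_of_pos ht0]; linarith)
  rw [abs_of_pos ht0, abs_le] at hsb
  have hs0 : 0 ≤ Real.sin (a / 2) :=
    (Real.sin_pos_of_pos_of_lt_pi ht0 (by nlinarith)).le
  have ht2 : 0.322885 ≤ a / 2 := by rw [ha]; nlinarith
  have hp3 : (0.322885 : ℝ) ^ 3 ≤ (a / 2) ^ 3 := pow_le_pow_left₀ (by norm_num) ht2 3
  have hp4 : (a / 2) ^ 5 ≤ (0.322886 : ℝ) ^ 5 := pow_le_pow_left₀ ht0.le ht1 5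
  norm_num at hp3 hp4
  have hsin_le : Real.sin (a / 2) ≤ 0.317845 := by linarith [hsb.2]
  have hhalf : Real.cos a = 1 - 2 * Real.sin (a / 2) ^ 2 := by
    have h := Real.sin_sq_eq_half_sub (a / 2)
    rw [show 2 * (a / 2) = a by ring] at h
    linarith
  have hclo : (0.79794 : ℝ) ≤ Real.cos a := by nlinarith [sq_nonneg (Real.sin (a/2))]
  have hc1 : Real.cos a < 1 := by nlinarith [Real.sin_pos_of_pos_of_lt_pi ht0 (by nlinarith)]
  set c := Real.cos a with hc
  have hcube : 1 < 2 * c ^ 3 := by nlinarith [sq_nonneg (c - 0.79794), mul_pos hc0 hc0]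
  have hlc : Real.log c < 0 := Real.log_neg hc0 hc1
  have hl2 : 0 < Real.log 2 := Real.log_pos (by norm_num)
  -- key : 0 < log 2 + 3 log c
  have hkey : 0 < Real.log 2 + 3 * Real.log c := by
    have h1 : 0 < Real.log (2 * c ^ 3) := Real.log_pos hcube
    rw [Real.log_mul (by norm_num) (by positivity), Real.log_pow] at h1
    push_cast at h1
    linarith
  have hd : 3 * Real.log c - Real.log 2 < 0 := by linarith
  -- simplify the exponent
  have hlogb : Real.logb 2 c = Real.log c / Real.log 2 := Real.log_div_log.symm
  have hexp : (1 : ℝ) / (-1 / Real.logb 2 c + 3) =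
      Real.log c / (3 * Real.log c - Real.log 2) := by
    rw [hlogb]
    have h1 : Real.log c ≠ 0 := hlc.ne
    have h2 : 3 * Real.log c - Real.log 2 ≠ 0 := hd.ne
    have h3 : -1 / (Real.log c / Real.log 2) + 3 = (3 * Real.log c - Real.log 2) / Real.log c := by
      field_simp; ring
    rw [h3, one_div_div]
  -- rewrite 16 ^ e as exp
  have h16 : (16 : ℝ) ^ (1 / (-1 / Real.logb 2 c + 3)) =
      Real.exp ((4 * Real.log 2) * (Real.log c / (3 * Real.log c - Real.log 2))) := by
    rw [hexp, Real.rpow_def_of_pos (by norm_num)]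
    congr 1
    rw [show (16 : ℝ) = 2 ^ 4 by norm_num, Real.log_pow]
    push_cast; ring
  -- 1 / c^2 = exp (-2 log c)
  have hinv : 1 / c ^ 2 = Real.exp (-2 * Real.log c) := by
    rw [show (-2 : ℝ) * Real.log c = Real.log ((c ^ 2)⁻¹) by
        rw [Real.log_inv, Real.log_pow]; push_cast; ring,
      Real.exp_log (by positivity), one_div]
  -- the exponent comparison
  have hcomp : -2 * Real.log c < (4 * Real.log 2) * (Real.log c / (3 * Real.log c - Real.log 2)) := by
    rw [mul_div_assoc', lt_div_iff_of_neg hd]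
    nlinarith [mul_pos (neg_pos.2 hlc) hkey]
  have hmain : 1 / c ^ 2 < (16 : ℝ) ^ (1 / (-1 / Real.logb 2 c + 3)) := by
    rw [hinv, h16]
    exact Real.exp_lt_exp.2 hcomp
  -- tan² a = (1 - c²)/c² = 1/c² - 1
  have htan : Real.tan a ^ 2 = 1 / c ^ 2 - 1 := by
    rw [Real.tan_eq_sin_div_cos, div_pow, Real.sin_sq,
      sub_div, div_self (pow_ne_zero 2 hc0.ne')]
  rw [htan]
  linarith
end

section
/- For constants ρ > 0, d_v > 0, m ≥ 0, in the high-SNR approximation log(1+x) ≈ log(x), the integral (2/(r_max²−r_min²)) ∫_{r_min}^{r_max} r · ln(ρ κ(r)) dr, where κ(r) = K₀/(r²+d_v²)^{m+3} for a constant K₀ > 0, evaluates to [d_max(ln(ρκ_min) + m + 3) − d_min(ln(ρκ_max) + m + 3)] / (r_max² − r_min²), with d_max = r_max² + d_v², d_min = r_min² + d_v², κ_min = K₀/d_max^{m+3}, κ_max = K₀/d_min^{m+3}. -/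
/-- log rewrite helper -/
lemma log_kappa (ρ K0 m u : ℝ) (hρ : 0 < ρ) (hK0 : 0 < K0) (hu : 0 < u) :
    Real.log (ρ * (K0 / u ^ (m + 3))) =
      Real.log ρ + Real.log K0 - (m + 3) * Real.log u := by
  rw [Real.log_mul hρ.ne' (by positivity), Real.log_div hK0.ne' (by positivity),
    Real.log_rpow hu]
  ring

/-- Closed form of the high-SNR average rate integral: with
`κ(r) = K₀/(r²+d_v²)^{m+3}`, `d_max = r_max²+d_v²`, `d_min = r_min²+d_v²`,
`κ_min = K₀/d_max^{m+3}`, `κ_max = K₀/d_min^{m+3}`, one has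
`(2/(r_max²−r_min²)) ∫ r·ln(ρκ(r)) dr
  = [d_max(ln(ρκ_min)+m+3) − d_min(ln(ρκ_max)+m+3)]/(r_max²−r_min²)`. -/
theorem average_rate_closed_form (ρ dv m K0 rmin rmax : ℝ) (hρ : 0 < ρ)
    (hdv : 0 < dv) (hm : 0 ≤ m) (hK0 : 0 < K0) (hrmin : 0 ≤ rmin)
    (hlt : rmin < rmax) :
    (2 / (rmax ^ 2 - rmin ^ 2)) *
        ∫ r in rmin..rmax, r * Real.log (ρ * (K0 / (r ^ 2 + dv ^ 2) ^ (m + 3))) =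
      ((rmax ^ 2 + dv ^ 2) *
          (Real.log (ρ * (K0 / (rmax ^ 2 + dv ^ 2) ^ (m + 3))) + m + 3) -
        (rmin ^ 2 + dv ^ 2) *
          (Real.log (ρ * (K0 / (rmin ^ 2 + dv ^ 2) ^ (m + 3))) + m + 3)) /
        (rmax ^ 2 - rmin ^ 2) := by
  have hu : ∀ r : ℝ, (0:ℝ) < r ^ 2 + dv ^ 2 := fun r => by positivity
  set C := Real.log ρ + Real.log K0 with hC
  -- rewrite integrand
  have hint : (∫ r in rmin..rmax, r * Real.log (ρ * (K0 / (r ^ 2 + dv ^ 2) ^ (m + 3))))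
      = ∫ r in rmin..rmax, r * (C - (m + 3) * Real.log (r ^ 2 + dv ^ 2)) := by
    apply intervalIntegral.integral_congr
    intro r _
    show r * Real.log (ρ * (K0 / (r ^ 2 + dv ^ 2) ^ (m + 3))) = r * (C - (m + 3) * Real.log (r ^ 2 + dv ^ 2))
    rw [log_kappa ρ K0 m _ hρ hK0 (hu r)]
  -- antiderivative
  set G : ℝ → ℝ := fun r =>
    (1/2) * ((r ^ 2 + dv ^ 2) * (C + m + 3) - (m + 3) * ((r ^ 2 + dv ^ 2) * Real.log (r ^ 2 + dv ^ 2)))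
    with hG
  have hderiv : ∀ r ∈ Set.uIcc rmin rmax,
      HasDerivAt G (r * (C - (m + 3) * Real.log (r ^ 2 + dv ^ 2))) r := by
    intro r _
    have h1 : HasDerivAt (fun r : ℝ => r ^ 2 + dv ^ 2) (2 * r) r := by
      simpa using ((hasDerivAt_pow 2 r).add_const (dv ^ 2))
    have h2 : HasDerivAt (fun r : ℝ => Real.log (r ^ 2 + dv ^ 2))
        (2 * r / (r ^ 2 + dv ^ 2)) r := h1.log (hu r).ne'
    have h3 : HasDerivAt (fun r : ℝ => (r ^ 2 + dv ^ 2) * Real.log (r ^ 2 + dv ^ 2))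
        (2 * r * Real.log (r ^ 2 + dv ^ 2) + (r ^ 2 + dv ^ 2) * (2 * r / (r ^ 2 + dv ^ 2))) r :=
      h1.mul h2
    have h4 : HasDerivAt G
        ((1/2) * ((2 * r) * (C + m + 3) - (m + 3) *
          (2 * r * Real.log (r ^ 2 + dv ^ 2) + (r ^ 2 + dv ^ 2) * (2 * r / (r ^ 2 + dv ^ 2))))) r :=
      (((h1.mul_const (C + m + 3)).sub (h3.const_mul (m + 3))).const_mul (1/2))
    convert h4 using 1
    have := (hu r).ne'
    field_simp
    ring
  have hcont : IntervalIntegrable (fun r => r * (C - (m + 3) * Real.log (r ^ 2 + dv ^ 2)))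
      MeasureTheory.volume rmin rmax := by
    apply Continuous.intervalIntegrable
    exact continuous_id.mul (continuous_const.sub (continuous_const.mul
      (Continuous.log ((continuous_pow 2).add continuous_const) (fun r => (hu r).ne'))))
  have key := intervalIntegral.integral_eq_sub_of_hasDerivAt hderiv hcont
  rw [hint, key, log_kappa ρ K0 m _ hρ hK0 (hu rmax), log_kappa ρ K0 m _ hρ hK0 (hu rmin)]
  have hA : rmax ^ 2 - rmin ^ 2 ≠ 0 := by nlinarith
  simp only [hG]
  field_simp
  ring
end
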